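/- Let G be a group and M a simple and faithful G-module (an abelian group with G-action that is simple as a G-module and on which G acts faithfully). Let n ≥ 1 and form the semidirect product M^n ⋊ G with G acting diagonally. Then for every normal subgroup H of M^n ⋊ G, either M^n ⊆ H or H ⊆ M^n. -/

import Mathlib

/-- Let `G` be a group and `M` a simple and faithful `G`-module.
For `n ≥ 1` form the semidirect product `Mⁿ ⋊ G` (with `G` acting diagonally on `Mⁿ`,
encoded by the hypothesis `hφ`).  Then every normal subgroup `H` of `Mⁿ ⋊ G`
either contains `Mⁿ` or is contained in `Mⁿ`. -/
theorem stmt0 (G M : Type*) [Group G] [AddCommGroup M] [DistribMulAction G M]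
    (hfaithful : FaithfulSMul G M) (hMnt : Nontrivial M)
    (hsimple : ∀ N : AddSubgroup M, (∀ (g : G) (m : M), m ∈ N → g • m ∈ N) → N = ⊥ ∨ N = ⊤)
    (n : ℕ) (hn : 1 ≤ n)
    (φ : G →* MulAut (Multiplicative (Fin n → M)))
    (hφ : ∀ (g : G) (v : Fin n → M) (i : Fin n),
      Multiplicative.toAdd (φ g (Multiplicative.ofAdd v)) i = g • (v i))
    (H : Subgroup (Multiplicative (Fin n → M) ⋊[φ] G)) (hH : H.Normal) :
    (SemidirectProduct.inl.range ≤ H) ∨ (H ≤ SemidirectProduct.inl.range) := by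
  classical
  haveI := hfaithful
  by_cases hc : ∀ x ∈ H, x ∈ (SemidirectProduct.inl : _ →* Multiplicative (Fin n → M) ⋊[φ] G).range
  · exact Or.inr hc
  · left
    push_neg at hc
    obtain ⟨x, hxH, hxr⟩ := hc
    have hg : x.right ≠ 1 := by
      intro h1
      exact hxr (by rw [SemidirectProduct.range_inl_eq_ker_rightHom]; exact h1)
    set g := x.right with hgdef
    have hφ' : ∀ (k : G) (w : Fin n → M),
        φ k (Multiplicative.ofAdd w) = Multiplicative.ofAdd (fun i => k • w i) := by
      intro k w
      apply Multiplicative.toAdd.injective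
      funext i
      exact hφ k w i
    obtain ⟨m₀, hm₀⟩ : ∃ m : M, g • m ≠ m := by
      by_contra h; push_neg at h
      exact hg (eq_of_smul_eq_smul (fun m : M => by rw [h m, one_smul]))
    -- key commutator computation
    have key : ∀ w : Fin n → M,
        SemidirectProduct.inl (Multiplicative.ofAdd (w - fun i => g • w i)) ∈ H := by
      intro w
      have hc1 := hH.conj_mem x hxH
        (SemidirectProduct.inl (Multiplicative.ofAdd w))
      have hmem := H.mul_mem hc1 (H.inv_mem hxH)
      have heq : (SemidirectProduct.inl (Multiplicative.ofAdd w)) * x *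
          (SemidirectProduct.inl (Multiplicative.ofAdd w))⁻¹ * x⁻¹ =
          SemidirectProduct.inl (φ := φ) (Multiplicative.ofAdd (w - fun i => g • w i)) := by
        ext
        · simp only [SemidirectProduct.mul_left, SemidirectProduct.inv_left,
            SemidirectProduct.left_inl, SemidirectProduct.right_inl,
            SemidirectProduct.mul_right, SemidirectProduct.inv_right, map_one,
            MulAut.one_apply, one_mul, mul_one, inv_one, ← MulAut.mul_apply, ← map_mul,
            mul_inv_cancel]
          rw [← hgdef,
            show (Multiplicative.ofAdd w)⁻¹ = Multiplicative.ofAdd (-w) from rfl,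
            hφ' g (-w)]
          have h2 : Multiplicative.ofAdd w * x.left *
              Multiplicative.ofAdd (fun i => g • (-w) i) * x.left⁻¹ =
              Multiplicative.ofAdd w * Multiplicative.ofAdd (fun i => g • (-w) i) := by
            apply Multiplicative.toAdd.injective
            simp only [toAdd_mul, toAdd_inv]
            abel
          rw [h2, ← ofAdd_add]
          congr 1
          simp [smul_neg, sub_eq_add_neg]
        · simp [div_eq_mul_inv, SemidirectProduct.mul_right, SemidirectProduct.inv_right]
      rwa [heq] at hmem
    -- conjugation by inr k
    have conjk : ∀ (k : G) (w : Fin n → M),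
        SemidirectProduct.inl (φ := φ) (Multiplicative.ofAdd w) ∈ H →
        SemidirectProduct.inl (φ := φ) (Multiplicative.ofAdd (fun i => k • w i)) ∈ H := by
      intro k w hw
      have hmem := hH.conj_mem _ hw (SemidirectProduct.inr k)
      rw [← map_inv, ← SemidirectProduct.inl_aut, hφ'] at hmem
      exact hmem
    -- the simple submodule
    have hsingle : ∀ (i : Fin n) (a b : M),
        (Pi.single (M := fun _ => M) i a) + Pi.single i b = Pi.single i (a + b) := by
      intro i a b
      funext j; rcases eq_or_ne j i with rfl | h
      · simp
      · simp [Pi.single_eq_of_ne h]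
    have hsingleneg : ∀ (i : Fin n) (a : M),
        -(Pi.single (M := fun _ => M) i a) = Pi.single i (-a) := by
      intro i a
      funext j; rcases eq_or_ne j i with rfl | h
      · simp
      · simp [Pi.single_eq_of_ne h]
    have hsinglesmul : ∀ (k : G) (i : Fin n) (a : M),
        (fun j => k • Pi.single (M := fun _ => M) i a j) = Pi.single i (k • a) := by
      intro k i a
      funext j; rcases eq_or_ne j i with rfl | h
      · simp
      · simp [Pi.single_eq_of_ne h, smul_zero]
    let N : AddSubgroup M :=
      { carrier := {m | ∀ i : Fin n,
          SemidirectProduct.inl (φ := φ) (Multiplicative.ofAdd (Pi.single i m)) ∈ H}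
        zero_mem' := by
          intro i
          rw [show Multiplicative.ofAdd (Pi.single (M := fun _ => M) i 0) = 1 by
            rw [Pi.single_zero]; rfl, map_one]
          exact H.one_mem
        add_mem' := by
          intro a b ha hb i
          have hmem := H.mul_mem (ha i) (hb i)
          rwa [← map_mul, ← ofAdd_add, hsingle] at hmem
        neg_mem' := by
          intro a ha i
          have hmem := H.inv_mem (ha i)
          rwa [← map_inv, ← ofAdd_neg, hsingleneg] at hmem }
    have hNstable : ∀ (k : G) (m : M), m ∈ N → k • m ∈ N := by
      intro k m hm i
      have hmem := conjk k _ (hm i)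
      rwa [hsinglesmul] at hmem
    have hNne : N ≠ ⊥ := by
      intro hbot
      have hmem : m₀ - g • m₀ ∈ N := by
        show ∀ i : Fin n, _
        intro i
        have hk := key (Pi.single i m₀)
        have hfun : (Pi.single i m₀ - fun j => g • Pi.single i m₀ j) =
            Pi.single (M := fun _ => M) i (m₀ - g • m₀) := by
          funext j
          rcases eq_or_ne j i with rfl | hji
          · simp
          · simp [Pi.single_eq_of_ne hji, smul_zero]
        rwa [hfun] at hk
      rw [hbot, AddSubgroup.mem_bot, sub_eq_zero] at hmem
      exact hm₀ hmem.symm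
    have hNtop : N = ⊤ := (hsimple N hNstable).resolve_left hNne
    -- conclude
    rintro y ⟨a, rfl⟩
    have hv : ∀ (m : M) (i : Fin n),
        SemidirectProduct.inl (φ := φ) (Multiplicative.ofAdd (Pi.single i m)) ∈ H := by
      intro m i
      have hm : m ∈ N := hNtop ▸ AddSubgroup.mem_top m
      exact hm i
    have hsum : ∀ s : Finset (Fin n), SemidirectProduct.inl (φ := φ)
        (Multiplicative.ofAdd (∑ i ∈ s, Pi.single i (Multiplicative.toAdd a i))) ∈ H := by
      intro s
      induction s using Finset.induction with
      | empty =>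
        simp only [Finset.sum_empty]
        rw [show Multiplicative.ofAdd (0 : Fin n → M) = 1 from rfl, map_one]
        exact H.one_mem
      | insert _ _ hnotmem ih =>
        rw [Finset.sum_insert hnotmem, ofAdd_add, map_mul]
        exact H.mul_mem (hv _ _) ih
    have hfinal := hsum Finset.univ
    rwa [Finset.univ_sum_single, ofAdd_toAdd] at hfinal
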